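/- Let E be a real Hilbert space and L : E → ℝ a differentiable function whose gradient ∇L is γ-Lipschitz for some γ > 0, and let 0 < μ ≤ 1/γ. Let π be a Borel probability measure on E, (Ω, P) a probability space, and V : Ω × E → E a measurable map. Assume that (ω, θ) ↦ L(θ − μ·V(ω, θ)) − L(θ) and (ω, θ) ↦ ‖V(ω, θ) − ∇L(θ)‖² are integrable with respect to P ⊗ π and that θ ↦ ‖∇L(θ)‖² is integrable with respect to π. Then ∫_Ω ∫_E [L(θ − μ·V(ω, θ)) − L(θ)] dπ(θ) dP(ω) ≤ −(μ/2)·( ∫_E ‖∇L(θ)‖² dπ(θ) − ∫_Ω ∫_E ‖V(ω, θ) − ∇L(θ)‖² dπ(θ) dP(ω) ). (Theorem A.2: the expected decrease of the population loss after one aggregated gradient step is controlled by the π-norm of the population gradient minus the delta error of the aggregation rule.) -/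

import Mathlib

open MeasureTheory

/-- The descent lemma: quadratic upper bound for a function with Lipschitz gradient. -/
lemma descent_lemma
    {E : Type*} [NormedAddCommGroup E] [InnerProductSpace ℝ E] [CompleteSpace E]
    (L : E → ℝ) (hL : Differentiable ℝ L)
    (γ : ℝ) (hγ : 0 < γ)
    (hlip : ∀ x y : E, ‖gradient L x - gradient L y‖ ≤ γ * ‖x - y‖)
    (x y : E) :
    L y ≤ L x + inner ℝ (gradient L x) (y - x) + γ / 2 * ‖y - x‖ ^ 2 := by
  have hgcont : Continuous (gradient L) := by
    have : LipschitzWith γ.toNNReal (gradient L) :=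
      LipschitzWith.of_dist_le_mul (fun a b => by
        simpa [dist_eq_norm, Real.coe_toNNReal _ hγ.le] using hlip a b)
    exact this.continuous
  set line : ℝ → E := fun t => x + t • (y - x) with hline
  have hlineC : Continuous line := by fun_prop
  have hderiv : ∀ t : ℝ, HasDerivAt (fun s => L (line s))
      (inner ℝ (gradient L (line t)) (y - x) : ℝ) t := by
    intro t
    have h1 : HasDerivAt line (y - x) t := by
      have h := ((hasDerivAt_id t).smul_const (y - x)).const_add x
      rw [one_smul] at h
      exact h
    have h2 := (hL (line t)).hasFDerivAt.comp_hasDerivAt t h1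
    have h3 : (fderiv ℝ L (line t)) (y - x) = inner ℝ (gradient L (line t)) (y - x) := by
      simp [gradient, InnerProductSpace.toDual_symm_apply]
    rw [h3] at h2
    exact h2
  have hcont : Continuous fun t : ℝ => (inner ℝ (gradient L (line t)) (y - x) : ℝ) := by
    exact (hgcont.comp hlineC).inner continuous_const
  have hFTC : L y - L x = ∫ t in (0:ℝ)..1, inner ℝ (gradient L (line t)) (y - x) := by
    have := intervalIntegral.integral_eq_sub_of_hasDerivAt
      (f := fun s => L (line s))
      (f' := fun t => (inner ℝ (gradient L (line t)) (y - x) : ℝ))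
      (fun t _ => hderiv t) (hcont.intervalIntegrable 0 1)
    simp only [hline] at this ⊢
    rw [this]
    norm_num
  have hbound : ∀ t ∈ Set.Icc (0:ℝ) 1,
      (inner ℝ (gradient L (line t)) (y - x) : ℝ) ≤
        inner ℝ (gradient L x) (y - x) + γ * ‖y - x‖ ^ 2 * t := by
    intro t ht
    have h1 : (inner ℝ (gradient L (line t)) (y - x) : ℝ) =
        inner ℝ (gradient L x) (y - x) + inner ℝ (gradient L (line t) - gradient L x) (y - x) := by
      rw [inner_sub_left]; ring
    rw [h1]
    have h2 : (inner ℝ (gradient L (line t) - gradient L x) (y - x) : ℝ) ≤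
        ‖gradient L (line t) - gradient L x‖ * ‖y - x‖ := real_inner_le_norm _ _
    have h3 : ‖gradient L (line t) - gradient L x‖ ≤ γ * (t * ‖y - x‖) := by
      have := hlip (line t) x
      simpa [hline, norm_smul, abs_of_nonneg ht.1] using this
    nlinarith [norm_nonneg (y - x), ht.1, mul_nonneg (mul_nonneg hγ.le ht.1) (norm_nonneg (y-x))]
  have hmono : (∫ t in (0:ℝ)..1, (inner ℝ (gradient L (line t)) (y - x) : ℝ)) ≤
      ∫ t in (0:ℝ)..1, (inner ℝ (gradient L x) (y - x) + γ * ‖y - x‖ ^ 2 * t) := by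
    apply intervalIntegral.integral_mono_on zero_le_one
      (hcont.intervalIntegrable 0 1)
      (by apply Continuous.intervalIntegrable; fun_prop)
    exact hbound
  have hcomp : (∫ t in (0:ℝ)..1, (inner ℝ (gradient L x) (y - x) + γ * ‖y - x‖ ^ 2 * t)) =
      inner ℝ (gradient L x) (y - x) + γ / 2 * ‖y - x‖ ^ 2 := by
    have hid : IntervalIntegrable (fun t : ℝ => t) MeasureTheory.volume 0 1 :=
      continuous_id.intervalIntegrable 0 1
    rw [intervalIntegral.integral_add intervalIntegrable_const (hid.const_mul _),
      intervalIntegral.integral_const, intervalIntegral.integral_const_mul,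
      integral_id]
    norm_num
    ring
  linarith [hFTC ▸ (hcomp ▸ hmono)]

/-- Theorem A.2: the expected decrease of the population loss after one aggregated
gradient step is controlled by the π-norm of the population gradient minus the
delta error of the aggregation rule. -/
theorem expected_one_step_error
    {E : Type*} [NormedAddCommGroup E] [InnerProductSpace ℝ E] [CompleteSpace E]
    [MeasurableSpace E] [BorelSpace E]
    (L : E → ℝ) (hL : Differentiable ℝ L)
    (γ : ℝ) (hγ : 0 < γ)
    (hlip : ∀ x y : E, ‖gradient L x - gradient L y‖ ≤ γ * ‖x - y‖)
    (μ : ℝ) (hμ : 0 < μ) (hμγ : μ ≤ 1 / γ)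
    (π : Measure E) [IsProbabilityMeasure π]
    {Ω : Type*} [MeasurableSpace Ω] (P : Measure Ω) [IsProbabilityMeasure P]
    (V : Ω × E → E) (hV : Measurable V)
    (hint1 : Integrable (fun p : Ω × E => L (p.2 - μ • V p) - L p.2) (P.prod π))
    (hint2 : Integrable (fun p : Ω × E => ‖V p - gradient L p.2‖ ^ 2) (P.prod π))
    (hint3 : Integrable (fun θ : E => ‖gradient L θ‖ ^ 2) π) :
    ∫ ω, ∫ θ, (L (θ - μ • V (ω, θ)) - L θ) ∂π ∂P ≤
      -(μ / 2) * ((∫ θ, ‖gradient L θ‖ ^ 2 ∂π)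
        - ∫ ω, ∫ θ, ‖V (ω, θ) - gradient L θ‖ ^ 2 ∂π ∂P) := by
  -- pointwise estimate
  have key : ∀ p : Ω × E, L (p.2 - μ • V p) - L p.2 ≤
      μ / 2 * (‖V p - gradient L p.2‖ ^ 2 - ‖gradient L p.2‖ ^ 2) := by
    intro p
    have hd := descent_lemma L hL γ hγ hlip p.2 (p.2 - μ • V p)
    have hsub : p.2 - μ • V p - p.2 = -(μ • V p) := by abel
    rw [hsub] at hd
    have h1 : (inner ℝ (gradient L p.2) (-(μ • V p)) : ℝ) =
        -(μ * inner ℝ (gradient L p.2) (V p)) := by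
      rw [inner_neg_right, real_inner_smul_right]
    have h2 : ‖-(μ • V p)‖ ^ 2 = μ ^ 2 * ‖V p‖ ^ 2 := by
      rw [norm_neg, norm_smul]
      rw [Real.norm_eq_abs, abs_of_pos hμ]
      ring
    rw [h1, h2] at hd
    have hμγ' : γ * μ ≤ 1 := by
      rw [le_div_iff₀ hγ] at hμγ
      linarith
    have hquad : γ / 2 * (μ ^ 2 * ‖V p‖ ^ 2) ≤ μ / 2 * ‖V p‖ ^ 2 := by
      nlinarith [sq_nonneg (‖V p‖), hμ.le]
    have hexp : ‖V p - gradient L p.2‖ ^ 2 =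
        ‖V p‖ ^ 2 - 2 * inner ℝ (V p) (gradient L p.2) + ‖gradient L p.2‖ ^ 2 := by
      rw [norm_sub_sq_real]
    rw [real_inner_comm] at h1
    nlinarith [hd, real_inner_comm (V p) (gradient L p.2)]
  -- integrability of θ ↦ ‖∇L θ‖² over the product
  have hgcont : Continuous (gradient L) := by
    have : LipschitzWith γ.toNNReal (gradient L) :=
      LipschitzWith.of_dist_le_mul (fun a b => by
        simpa [dist_eq_norm, Real.coe_toNNReal _ hγ.le] using hlip a b)
    exact this.continuous
  have hg2 : Integrable (fun p : Ω × E => ‖gradient L p.2‖ ^ 2) (P.prod π) := by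
    have hmap : Measure.map Prod.snd (P.prod π) = π := by
      rw [Measure.map_snd_prod, measure_univ, one_smul]
    have : Integrable (fun θ : E => ‖gradient L θ‖ ^ 2) (Measure.map Prod.snd (P.prod π)) := by
      rw [hmap]; exact hint3
    exact this.comp_measurable measurable_snd
  -- integrable upper bound
  have hG : Integrable (fun p : Ω × E =>
      μ / 2 * (‖V p - gradient L p.2‖ ^ 2 - ‖gradient L p.2‖ ^ 2)) (P.prod π) :=
    (hint2.sub hg2).const_mul _
  have hle : (∫ p, (L (p.2 - μ • V p) - L p.2) ∂(P.prod π)) ≤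
      ∫ p, μ / 2 * (‖V p - gradient L p.2‖ ^ 2 - ‖gradient L p.2‖ ^ 2) ∂(P.prod π) :=
    integral_mono hint1 hG key
  have e1 : (∫ p, (L (p.2 - μ • V p) - L p.2) ∂(P.prod π)) =
      ∫ ω, ∫ θ, (L (θ - μ • V (ω, θ)) - L θ) ∂π ∂P := integral_prod _ hint1
  have e2 : (∫ p, ‖V p - gradient L p.2‖ ^ 2 ∂(P.prod π)) =
      ∫ ω, ∫ θ, ‖V (ω, θ) - gradient L θ‖ ^ 2 ∂π ∂P := integral_prod _ hint2
  have e3 : (∫ p : Ω × E, ‖gradient L p.2‖ ^ 2 ∂(P.prod π)) =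
      ∫ θ, ‖gradient L θ‖ ^ 2 ∂π := by
    rw [integral_prod _ hg2]
    simp
  have e4 : (∫ p, μ / 2 * (‖V p - gradient L p.2‖ ^ 2 - ‖gradient L p.2‖ ^ 2) ∂(P.prod π)) =
      μ / 2 * ((∫ p, ‖V p - gradient L p.2‖ ^ 2 ∂(P.prod π)) -
        ∫ p : Ω × E, ‖gradient L p.2‖ ^ 2 ∂(P.prod π)) := by
    rw [integral_const_mul, integral_sub hint2 hg2]
  rw [e1, e4, e2, e3] at hle
  linarith
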